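/- Let f: ℝ → ℝ be twice differentiable and let the focal curve be parametrized by c(t) = (1/(1 - f'(t)), (f(t) - t·f'(t))/(1 - f'(t))) for t with f'(t) ≠ 1. Then c'(t) = (f''(t)/(1 - f'(t))²) • (1, f(t) - t), i.e., the velocity of the focal curve at t is a scalar multiple of the arrow direction vector (1, f(t) - t). -/

import Mathlib

/-- The velocity of the focal curve at `t` equals
`(f''(t)/(1 - f'(t))²) • (1, f t - t)`, a scalar multiple of the arrow
direction vector `(1, f t - t)`. -/
theorem stmt_1 (f : ℝ → ℝ) (hf : Differentiable ℝ f)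
    (hf' : Differentiable ℝ (deriv f)) (t : ℝ) (ht : deriv f t ≠ 1) :
    HasDerivAt
      (fun u => ((1 / (1 - deriv f u),
        (f u - u * deriv f u) / (1 - deriv f u)) : ℝ × ℝ))
      ((deriv (deriv f) t / (1 - deriv f t) ^ 2) • ((1, f t - t) : ℝ × ℝ)) t := by
  have hne : 1 - deriv f t ≠ 0 := sub_ne_zero.mpr (Ne.symm ht)
  have hd : HasDerivAt f (deriv f t) t := (hf t).hasDerivAt
  have hd' : HasDerivAt (deriv f) (deriv (deriv f) t) t := (hf' t).hasDerivAt
  have hden : HasDerivAt (fun u => 1 - deriv f u) (0 - deriv (deriv f) t) t :=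
    (hasDerivAt_const t 1).sub hd'
  have h1 := (hasDerivAt_const t (1 : ℝ)).div hden hne
  have hnum : HasDerivAt (fun u => f u - u * deriv f u)
      (deriv f t - (1 * deriv f t + t * deriv (deriv f) t)) t :=
    hd.sub ((hasDerivAt_id t).mul hd')
  have h2 := hnum.div hden hne
  have := h1.prodMk h2
  convert this using 1
  · funext u; simp only [Pi.div_apply]
  · ext <;> simp only [Prod.smul_fst, Prod.smul_snd, smul_eq_mul] <;> field_simp <;> ring
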